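/- Let s ∈ (0,1) with s ≠ 1/2. Then H_s > γ_s, i.e., Γ(s+1/2)²/π > 2^{2s−1}·Γ(s+1/2)/(√π · Γ(1−s)). -/

import Mathlib

open MeasureTheory Real

noncomputable section

/-- The first coordinate `x₁` of a point in `ℝⁿ`. -/
def fc {n : ℕ} (x : EuclideanSpace ℝ (Fin n)) : ℝ :=
  if h : 0 < n then x ⟨0, h⟩ else 0

/-- The open half-space `ℝⁿ₊ = {x : x₁ > 0}`. -/
def halfSpace (n : ℕ) : Set (EuclideanSpace ℝ (Fin n)) := {x | 0 < fc x}

/-- The normalizing constant `C_{n,s}`. -/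
def Cns (n : ℕ) (s : ℝ) : ℝ :=
  s * (2:ℝ) ^ (2*s) * Real.Gamma ((n:ℝ)/2 + s) / (Real.pi ^ ((n:ℝ)/2) * Real.Gamma (1-s))

/-- The sharp fractional Hardy constant `H_s = Γ(s+1/2)²/π`. -/
def Hconst (s : ℝ) : ℝ := Real.Gamma (s + 1/2) ^ 2 / Real.pi

/-- The Gagliardo quadratic form `Q_s(u)`. -/
def Qform (n : ℕ) (s : ℝ) (u : EuclideanSpace ℝ (Fin n) → ℝ) : ℝ :=
  (Cns n s / 2) * ∫ x : EuclideanSpace ℝ (Fin n), ∫ y : EuclideanSpace ℝ (Fin n),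
    (u x - u y)^2 / ‖x - y‖ ^ ((n:ℝ) + 2*s)

/-- The bilinear form `B_s(v,w)` associated with `Q_s`. -/
def Bform (n : ℕ) (s : ℝ) (v w : EuclideanSpace ℝ (Fin n) → ℝ) : ℝ :=
  (Cns n s / 2) * ∫ x : EuclideanSpace ℝ (Fin n), ∫ y : EuclideanSpace ℝ (Fin n),
    (v x - v y) * (w x - w y) / ‖x - y‖ ^ ((n:ℝ) + 2*s)

/-- Finiteness of the Gagliardo form, `Q_s(u) < ∞`. -/
def QformFinite (n : ℕ) (s : ℝ) (u : EuclideanSpace ℝ (Fin n) → ℝ) : Prop :=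
  (∫⁻ x : EuclideanSpace ℝ (Fin n), ∫⁻ y : EuclideanSpace ℝ (Fin n),
    ENNReal.ofReal ((u x - u y)^2 / ‖x - y‖ ^ ((n:ℝ) + 2*s))) < ⊤

/-- Membership in `𝒟̃^s(ℝⁿ₊)`: measurable, in `L^{2*_s}(ℝⁿ)`, finite Gagliardo form,
vanishing a.e. on `{x₁ ≤ 0}`. -/
def memDs (n : ℕ) (s : ℝ) (u : EuclideanSpace ℝ (Fin n) → ℝ) : Prop :=
  Measurable u ∧ MemLp u (ENNReal.ofReal (2*(n:ℝ)/((n:ℝ)-2*s))) volume ∧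
  QformFinite n s u ∧ (∀ᵐ x : EuclideanSpace ℝ (Fin n), fc x ≤ 0 → u x = 0)

/-- The Hardy term `∫_{ℝⁿ₊} x₁^{-2s} u² dx`. -/
def hardyInt (n : ℕ) (s : ℝ) (u : EuclideanSpace ℝ (Fin n) → ℝ) : ℝ :=
  ∫ x in halfSpace n, fc x ^ (-(2*s)) * (u x)^2

/-- The fractional Sobolev constant `S_s` on `ℝⁿ`. -/
def sobolevS (n : ℕ) (s : ℝ) : ℝ :=
  sInf { r | ∃ u : EuclideanSpace ℝ (Fin n) → ℝ, Measurable u ∧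
    MemLp u (ENNReal.ofReal (2*(n:ℝ)/((n:ℝ)-2*s))) volume ∧ QformFinite n s u ∧ u ≠ 0 ∧
    r = Qform n s u /
      (∫ x : EuclideanSpace ℝ (Fin n), |u x| ^ (2*(n:ℝ)/((n:ℝ)-2*s))) ^ (((n:ℝ)-2*s)/(n:ℝ)) }

/-- The best Hardy–Sobolev constant `S_s^{λ,p}(ℝⁿ₊)` with weight `x₁^{-pb}`. -/
def SsLam (n : ℕ) (s lam p b : ℝ) : ℝ :=
  sInf { r | ∃ u, memDs n s u ∧ u ≠ 0 ∧
    r = (Qform n s u - lam * hardyInt n s u) /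
        (∫ x in halfSpace n, fc x ^ (-(p*b)) * |u x| ^ p) ^ (2/p) }

/-- The best critical Hardy–Sobolev constant `S_s^{λ,2*_s}(ℝⁿ₊)`. -/
def SsCrit (n : ℕ) (s lam : ℝ) : ℝ :=
  sInf { r | ∃ u, memDs n s u ∧ u ≠ 0 ∧
    r = (Qform n s u - lam * hardyInt n s u) /
        (∫ x in halfSpace n, |u x| ^ (2*(n:ℝ)/((n:ℝ)-2*s))) ^ (((n:ℝ)-2*s)/(n:ℝ)) }

namespace HGaux

lemma ofReal_aux {w x : ℝ} (hx : x ∈ Set.Icc (0:ℝ) 1) :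
    ((x:ℂ)) ^ ((w:ℂ)) * ((1:ℂ) - (x:ℂ)) ^ ((w:ℂ)) = ((x ^ w * (1-x) ^ w : ℝ) : ℂ) := by
  have h1 : ((1:ℂ) - (x:ℂ)) = (((1-x : ℝ)):ℂ) := by push_cast; ring
  rw [h1, ← Complex.ofReal_cpow hx.1, ← Complex.ofReal_cpow (by linarith [hx.2]),
    ← Complex.ofReal_mul]

lemma intF {w : ℝ} (hw : -1 < w) :
    IntervalIntegrable (fun x : ℝ => x ^ w * (1-x) ^ w) volume 0 1 := by
  have hre : 0 < Complex.re ((w:ℂ) + 1) := by simp; linarith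
  have hc := Complex.betaIntegral_convergent (u := (w:ℂ)+1) (v := (w:ℂ)+1) hre hre
  have hc' : IntervalIntegrable (fun x : ℝ => (x:ℂ) ^ (w:ℂ) * (1 - (x:ℂ)) ^ (w:ℂ)) volume 0 1 := by
    simpa using hc
  rw [intervalIntegrable_iff_integrableOn_Ioc_of_le zero_le_one] at hc' ⊢
  refine MeasureTheory.IntegrableOn.congr_fun (Integrable.re hc') ?_ measurableSet_Ioc
  intro x hx
  have hx' : x ∈ Set.Icc (0:ℝ) 1 := ⟨hx.1.le, hx.2⟩
  simp [ofReal_aux hx']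

lemma gamma_sq {s : ℝ} (hs : 0 < s) :
    Real.Gamma (s+1/2) ^ 2
      = Real.Gamma (2*s+1) * ∫ x in (0:ℝ)..1, x ^ (s-1/2) * (1-x) ^ (s-1/2) := by
  have hre : 0 < Complex.re ((s:ℂ) + 1/2) := by simp; linarith
  have hb : Complex.betaIntegral ((s:ℂ)+1/2) ((s:ℂ)+1/2)
      = (((∫ x in (0:ℝ)..1, x ^ (s-1/2) * (1-x) ^ (s-1/2)) : ℝ) : ℂ) := by
    rw [Complex.betaIntegral, ← intervalIntegral.integral_ofReal]
    apply intervalIntegral.integral_congr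
    intro x hx
    rw [Set.uIcc_of_le zero_le_one] at hx
    rw [show ((s:ℂ)+1/2-1) = (((s-1/2 : ℝ)):ℂ) by push_cast; ring]
    exact ofReal_aux hx
  have h := Complex.Gamma_mul_Gamma_eq_betaIntegral hre hre
  rw [hb] at h
  rw [← Complex.ofReal_inj]
  push_cast [← Complex.Gamma_ofReal]
  rw [show ((2:ℂ)*(s:ℂ)+1) = ((s:ℂ)+1/2)+((s:ℂ)+1/2) by ring, ← h]
  ring

lemma int_lb {s : ℝ} (h0 : 0 < s) (h1 : s < 1) :
    2 - 2*s ≤ ∫ x in (0:ℝ)..1, x ^ (s-1/2) * (1-x) ^ (s-1/2) := by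
  set w := s - 1/2 with hw
  have hw1 : -1 < w := by rw [hw]; linarith
  have hw2 : 0 < w + 1 := by linarith
  have hf := intF hw1
  have hg1 : IntervalIntegrable (fun x:ℝ => x ^ w) volume 0 1 :=
    intervalIntegral.intervalIntegrable_rpow' hw1
  have hg2 : IntervalIntegrable (fun x:ℝ => (1-x) ^ w) volume 0 1 := by
    simpa using (hg1.comp_sub_left 1).symm
  have hg : IntervalIntegrable (fun x:ℝ => x ^ w + (1-x) ^ w - 1) volume 0 1 :=
    (hg1.add hg2).sub intervalIntegrable_const
  have hpt : ∀ x ∈ Set.Icc (0:ℝ) 1, x ^ w + (1-x) ^ w - 1 ≤ x ^ w * (1-x) ^ w := by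
    intro x hx
    have key : 0 ≤ (1 - x ^ w) * (1 - (1-x) ^ w) := by
      rcases le_or_gt 0 w with hc | hc
      · have ha : x ^ w ≤ 1 := Real.rpow_le_one hx.1 hx.2 hc
        have hb : (1-x) ^ w ≤ 1 := Real.rpow_le_one (by linarith [hx.2]) (by linarith [hx.1]) hc
        exact mul_nonneg (by linarith) (by linarith)
      · rcases eq_or_lt_of_le hx.1 with h0x | h0x
        · rw [← h0x, Real.zero_rpow (by linarith)]; simp
        rcases eq_or_lt_of_le hx.2 with h1x | h1x
        · rw [h1x]; rw [show (1:ℝ)-1 = 0 by ring, Real.zero_rpow (by linarith)]; simp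
        have ha : 1 ≤ x ^ w :=
          Real.one_le_rpow_of_pos_of_le_one_of_nonpos h0x hx.2 hc.le
        have hb : 1 ≤ (1-x) ^ w :=
          Real.one_le_rpow_of_pos_of_le_one_of_nonpos (by linarith) (by linarith) hc.le
        nlinarith
    nlinarith [key]
  have hmono := intervalIntegral.integral_mono_on zero_le_one hg hf hpt
  have hval : (∫ x in (0:ℝ)..1, (x ^ w + (1-x) ^ w - 1)) = 2/(w+1) - 1 := by
    rw [intervalIntegral.integral_sub (hg1.add hg2) intervalIntegrable_const,
      intervalIntegral.integral_add hg1 hg2]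
    have hx1 : (∫ x in (0:ℝ)..1, x ^ w) = 1/(w+1) := by
      rw [integral_rpow (Or.inl hw1), Real.one_rpow, Real.zero_rpow (by linarith)]
      ring
    have hx2 : (∫ x in (0:ℝ)..1, (1-x) ^ w) = 1/(w+1) := by
      rw [intervalIntegral.integral_comp_sub_left (fun x => x ^ w) 1]
      norm_num [hx1]
    rw [hx1, hx2]
    simp; ring
  rw [hval] at hmono
  have hle : 2 - 2*s ≤ 2/(w+1) - 1 := by
    rw [le_sub_iff_add_le, le_div_iff₀ hw2, hw]
    nlinarith [sq_nonneg (s - 1/2)]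
  linarith

lemma sin_lt {s : ℝ} (h0 : 0 < s) (h1 : s < 1) (hne : s ≠ 1/2) :
    Real.sin (π * s) < 4 * s * (1 - s) := by
  set d := |s - 1/2| with hd
  have hd0 : 0 < d := abs_pos.mpr (sub_ne_zero.mpr hne)
  have hd2 : d < 1/2 := abs_lt.mpr ⟨by linarith, by linarith⟩
  have hsin : Real.sin (π*s) = Real.cos (π*d) := by
    rw [hd, show π * |s - 1/2| = |π * (s - 1/2)| by
        rw [abs_mul, abs_of_pos Real.pi_pos], Real.cos_abs,
      show π * (s - 1/2) = π * s - π/2 by ring, Real.cos_sub_pi_div_two]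
  set θ := π*d/2 with hθ
  have hθ0 : 0 < θ := by rw [hθ]; positivity
  have hθ1 : θ < π/4 := by rw [hθ]; nlinarith [Real.pi_pos]
  have hconc := strictConcaveOn_sin_Icc.2
    (show (0:ℝ) ∈ Set.Icc (0:ℝ) π from ⟨le_rfl, Real.pi_pos.le⟩)
    (show π/4 ∈ Set.Icc (0:ℝ) π from ⟨by positivity, by linarith [Real.pi_pos]⟩)
    (show (0:ℝ) ≠ π/4 from ne_of_lt (by positivity))
    (show (0:ℝ) < 1 - 2*d from by linarith) (show (0:ℝ) < 2*d from by linarith)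
    (by ring)
  have hsinθ : Real.sqrt 2 * d < Real.sin θ := by
    have h4 : Real.sin (π/4) = Real.sqrt 2 / 2 := Real.sin_pi_div_four
    have : (1-2*d) • Real.sin 0 + (2*d) • Real.sin (π/4)
        < Real.sin ((1-2*d) • (0:ℝ) + (2*d) • (π/4)) := hconc
    simp only [smul_eq_mul, Real.sin_zero, mul_zero, zero_add, h4] at this
    calc Real.sqrt 2 * d = (1-2*d) * 0 + 2*d*(Real.sqrt 2/2) := by ring
      _ < Real.sin ((1-2*d) * 0 + 2*d*(π/4)) := by
          simpa using this
      _ = Real.sin θ := by rw [hθ]; ring_nf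
  have hcos : Real.cos (π*d) = 1 - 2 * Real.sin θ ^ 2 := by
    rw [show π*d = 2*θ by rw [hθ]; ring, Real.cos_two_mul]
    have := Real.sin_sq_add_cos_sq θ
    nlinarith
  have h2 : 2 * d^2 < Real.sin θ ^ 2 := by
    have h22 : Real.sqrt 2 * d > 0 := by positivity
    nlinarith [Real.sq_sqrt (by norm_num : (2:ℝ) ≥ 0), hsinθ]
  have hd2' : d^2 = (s - 1/2)^2 := sq_abs _
  rw [hsin, hcos]
  nlinarith [h2, hd2']

end HGaux

/-- for `s ∈ (0,1)`, `s ≠ 1/2`, one has `H_s > γ_s`, i.e.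
`Γ(s+1/2)²/π > 2^{2s-1}·Γ(s+1/2)/(√π·Γ(1-s))`. -/
theorem Hconst_gt_gamma (s : ℝ) (hs0 : 0 < s) (hs1 : s < 1) (hne : s ≠ 1/2) :
    Real.Gamma (s + 1/2) ^ 2 / Real.pi >
      (2:ℝ) ^ (2*s-1) * Real.Gamma (s + 1/2) / (Real.sqrt Real.pi * Real.Gamma (1-s)) := by
  have hπ := Real.pi_pos
  have hsin_pos : 0 < Real.sin (π*s) :=
    Real.sin_pos_of_pos_of_lt_pi (by positivity) (by nlinarith)
  have hG1 : 0 < Real.Gamma s := Real.Gamma_pos_of_pos hs0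
  have hGh : 0 < Real.Gamma (s+1/2) := Real.Gamma_pos_of_pos (by linarith)
  have hG2 : 0 < Real.Gamma (2*s) := Real.Gamma_pos_of_pos (by linarith)
  have hG1s : 0 < Real.Gamma (1-s) := Real.Gamma_pos_of_pos (by linarith)
  have hsqπ : 0 < Real.sqrt π := Real.sqrt_pos.mpr hπ
  have hG21 : Real.Gamma (2*s+1) = 2*s * Real.Gamma (2*s) := by
    rw [Real.Gamma_add_one (by positivity)]
  have key : Real.sin (π*s) * Real.Gamma (2*s) < Real.Gamma (s+1/2)^2 := by
    calc Real.sin (π*s) * Real.Gamma (2*s)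
        < (4*s*(1-s)) * Real.Gamma (2*s) :=
          mul_lt_mul_of_pos_right (HGaux.sin_lt hs0 hs1 hne) hG2
      _ = (2*s*Real.Gamma (2*s)) * (2-2*s) := by ring
      _ ≤ (2*s*Real.Gamma (2*s)) * ∫ x in (0:ℝ)..1, x ^ (s-1/2) * (1-x) ^ (s-1/2) :=
          mul_le_mul_of_nonneg_left (HGaux.int_lb hs0 hs1) (by positivity)
      _ = Real.Gamma (s+1/2)^2 := by rw [HGaux.gamma_sq hs0, hG21]
  have hrefl := Real.Gamma_mul_Gamma_one_sub s
  have hdup := Real.Gamma_mul_Gamma_add_half s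
  have hpow : (2:ℝ)^(2*s-1) * (2:ℝ)^(1-2*s) = 1 := by
    rw [← Real.rpow_add two_pos]; norm_num
  rw [gt_iff_lt, div_lt_div_iff₀ (by positivity) hπ]
  rw [← mul_lt_mul_iff_of_pos_right (show (0:ℝ) < Real.Gamma s * Real.sin (π*s) by positivity)]
  have hπs : Real.sqrt π * Real.sqrt π = π := Real.mul_self_sqrt hπ.le
  have h2 : Real.Gamma s * Real.Gamma (1-s) * Real.sin (π*s) = π := by
    rw [hrefl]; field_simp
  calc (2:ℝ)^(2*s-1) * Real.Gamma (s+1/2) * π * (Real.Gamma s * Real.sin (π*s))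
      = π * Real.sqrt π * (Real.sin (π*s) * Real.Gamma (2*s)) := by
        linear_combination ((2:ℝ)^(2*s-1) * π * Real.sin (π*s)) * hdup
          + (π * Real.sqrt π * Real.sin (π*s) * Real.Gamma (2*s)) * hpow
    _ < π * Real.sqrt π * Real.Gamma (s+1/2)^2 :=
        mul_lt_mul_of_pos_left key (by positivity)
    _ = Real.Gamma (s+1/2)^2 * (Real.sqrt π * Real.Gamma (1-s)) * (Real.Gamma s * Real.sin (π*s)) := by
        linear_combination (-(Real.Gamma (s+1/2)^2 * Real.sqrt π)) * h2
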